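/- Let τ = (1+√5)/2 and let ℤ[τ] = {p + qτ : p, q ∈ ℤ} ⊆ ℝ. If a, b ∈ ℤ[τ] satisfy a ≤ 0 and b ≤ 0 and the symmetric real matrix [[2, a, b], [a, 2, -τ], [b, -τ, 2]] has determinant 0, then a = b = 1 - τ. In other words, [[2, τ', τ'], [τ', 2, -τ], [τ', -τ, 2]] with τ' = 1 - τ is the unique affine extension of the Cartan matrix of H₂ satisfying the conditions: diagonal entries 2, symmetry, off-diagonal entries nonpositive elements of ℤ[τ], and determinant 0. -/
import Mathlib

noncomputable def tau : ℝ := (1 + Real.sqrt 5) / 2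

/-- The ring of integers ℤ[τ] of ℚ(√5), as a subset of ℝ. -/
def Ztau : Set ℝ := {x : ℝ | ∃ p q : ℤ, x = (p : ℝ) + (q : ℝ) * tau}

lemma sq_le_12 (x : ℤ) (h : x^2 ≤ 12) : -3 ≤ x ∧ x ≤ 3 :=
  ⟨by nlinarith, by nlinarith⟩

lemma sq_le_6 (x : ℤ) (h : x^2 ≤ 6) : -2 ≤ x ∧ x ≤ 2 :=
  ⟨by nlinarith, by nlinarith⟩

set_option maxHeartbeats 4000000 in
theorem aux_h2_sols : ∀ p ∈ Finset.Icc (-3:ℤ) 3, ∀ q ∈ Finset.Icc (-4:ℤ) 4,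
    ∀ r ∈ Finset.Icc (-2:ℤ) 2, ∀ s ∈ Finset.Icc (-3:ℤ) 3,
    p^2+q^2+r^2+s^2+p*s+q*r+q*s = 3 →
    2*p*q+q^2+2*r*s+s^2+p*r+p*s+q*r+2*q*s = -1 →
    (p, q, r, s) ∈ ([(-2,0,0,1), (-1,1,-1,1), (-1,1,0,-1), (0,-1,-1,1), (0,-1,2,0),
      (0,1,-2,0), (0,1,1,-1), (1,-1,0,1), (1,-1,1,-1), (2,0,0,-1)] : List (ℤ×ℤ×ℤ×ℤ)) := by
  decide

set_option maxHeartbeats 1000000 in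
/-- Uniqueness of the affine extension of the Cartan matrix of H₂. -/
theorem affine_extension_H2_unique (a b : ℝ)
    (ha : a ∈ Ztau) (hb : b ∈ Ztau) (ha0 : a ≤ 0) (hb0 : b ≤ 0)
    (hdet : Matrix.det !![(2 : ℝ), a, b; a, 2, -tau; b, -tau, 2] = 0) :
    a = 1 - tau ∧ b = 1 - tau := by
  obtain ⟨p, q, hpq⟩ := ha
  obtain ⟨r, s, hrs⟩ := hb
  subst hpq hrs
  have h5 : Real.sqrt 5 ^ 2 = 5 := Real.sq_sqrt (by norm_num)
  have htau : 1 < tau := by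
    unfold tau
    nlinarith [Real.sqrt_nonneg 5, h5]
  have irr : Irrational (Real.sqrt 5) := by
    have := (by norm_num : Nat.Prime 5).irrational_sqrt
    simpa using this
  simp [Matrix.det_fin_three] at hdet
  unfold tau at hdet
  set c : ℤ := 2*(p^2+q^2+r^2+s^2+p*s+q*r+q*s-3) + (2*p*q+q^2+2*r*s+s^2+p*r+p*s+q*r+2*q*s+1) with hc
  set d : ℤ := 2*p*q+q^2+2*r*s+s^2+p*r+p*s+q*r+2*q*s+1 with hd
  have key : (c : ℝ) + (d : ℝ) * Real.sqrt 5 = 0 := by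
    rw [hc, hd]
    push_cast
    linear_combination (-1 : ℝ) * hdet +
      (-(p:ℝ)*s/2 - (q:ℝ)^2/2 - (q:ℝ)*r/2 - (q:ℝ)*s*Real.sqrt 5/4 - 3*(q:ℝ)*s/4
        - (s:ℝ)^2/2 - 1/2) * h5
  have hd0 : d = 0 := by
    by_contra h
    have hdr : (d : ℝ) ≠ 0 := Int.cast_ne_zero.mpr h
    apply irr
    refine ⟨(-c : ℚ) / (d : ℚ), ?_⟩
    push_cast
    field_simp
    linarith [key]
  have hc0 : c = 0 := by
    have : (c : ℝ) = 0 := by rw [hd0] at key; simpa using key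
    exact_mod_cast this
  rw [hd0] at hc
  have hE1 : p^2+q^2+r^2+s^2+p*s+q*r+q*s = 3 := by linarith
  have hE2 : 2*p*q+q^2+2*r*s+s^2+p*r+p*s+q*r+2*q*s = -1 := by linarith
  have k : (2*p+s)^2+(2*q+r+s)^2+2*r^2+(r-s)^2+s^2 = 12 := by linear_combination 4*hE1
  have ks : s^2 ≤ 12 := by linarith [sq_nonneg (2*p+s), sq_nonneg (2*q+r+s), sq_nonneg r, sq_nonneg (r-s)]
  have kr : 2*r^2 ≤ 12 := by linarith [sq_nonneg (2*p+s), sq_nonneg (2*q+r+s), sq_nonneg s, sq_nonneg (r-s)]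
  have kA : (2*p+s)^2 ≤ 12 := by linarith [sq_nonneg s, sq_nonneg (2*q+r+s), sq_nonneg r, sq_nonneg (r-s)]
  have kB : (2*q+r+s)^2 ≤ 12 := by linarith [sq_nonneg s, sq_nonneg (2*p+s), sq_nonneg r, sq_nonneg (r-s)]
  obtain ⟨hs1, hs2⟩ := sq_le_12 s ks
  obtain ⟨hr1, hr2⟩ := sq_le_6 r (by linarith)
  obtain ⟨hA1, hA2⟩ := sq_le_12 _ kA
  obtain ⟨hB1, hB2⟩ := sq_le_12 _ kB
  have H := aux_h2_sols p (Finset.mem_Icc.mpr ⟨by omega, by omega⟩)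
    q (Finset.mem_Icc.mpr ⟨by omega, by omega⟩)
    r (Finset.mem_Icc.mpr ⟨by omega, by omega⟩)
    s (Finset.mem_Icc.mpr ⟨by omega, by omega⟩) hE1 hE2
  simp only [List.mem_cons, List.not_mem_nil, or_false, Prod.mk.injEq] at H
  rcases H with ⟨h1,h2,h3,h4⟩|⟨h1,h2,h3,h4⟩|⟨h1,h2,h3,h4⟩|⟨h1,h2,h3,h4⟩|⟨h1,h2,h3,h4⟩|
    ⟨h1,h2,h3,h4⟩|⟨h1,h2,h3,h4⟩|⟨h1,h2,h3,h4⟩|⟨h1,h2,h3,h4⟩|⟨h1,h2,h3,h4⟩ <;>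
    subst h1 h2 h3 h4 <;>
    first
      | (constructor <;> push_cast <;> ring1)
      | (exfalso; push_cast at ha0 hb0; linarith)
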